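/- Let G be a group, c ∈ G, and m ≥ 1. Let φ be the map on tuples (w₀, w₁, …, w_m) ∈ G^{m+1} with w₀w₁⋯w_m = c given by φ(w₀; w₁, …, w_m) = ((c w_m c⁻¹) w₀ (c w_m c⁻¹)⁻¹; c w_m c⁻¹, w₁, …, w_{m-1}). Then φ^m sends (w₀; w₁, …, w_m) to (c w₀ c⁻¹; c w₁ c⁻¹, …, c w_m c⁻¹), i.e., φ^m acts as simultaneous conjugation by c. -/

import Mathlib

def phi {G : Type*} [Group G] (c : G) (m : ℕ) (w : Fin (m + 1) → G) :
    Fin (m + 1) → G := fun i =>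
  if i = 0 then (c * w (Fin.last m) * c⁻¹) * w 0 * (c * w (Fin.last m) * c⁻¹)⁻¹
  else if i = 1 then c * w (Fin.last m) * c⁻¹
  else w (i - 1)

theorem stmt_4 {G : Type*} [Group G] (c : G) (m : ℕ) (hm : 1 ≤ m)
    (w : Fin (m + 1) → G) (hw : (List.ofFn w).prod = c) :
    (phi c m)^[m] w = fun i => c * w i * c⁻¹ := by
  have hone : (1 : Fin (m+1)).val = 1 := by
    rw [Fin.val_one']; exact Nat.mod_eq_of_lt (by omega)
  have key : ∀ k, k ≤ m → (phi c m)^[k] w = fun i : Fin (m+1) =>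
      if i.val = 0 then
        (c * (((List.ofFn w).take (m - k + 1)).prod)⁻¹) * w 0 *
          (c * (((List.ofFn w).take (m - k + 1)).prod)⁻¹)⁻¹
      else if i.val ≤ k then c * w ⟨min (m - k + i.val) m, by omega⟩ * c⁻¹
      else w ⟨min (i.val - k) m, by omega⟩ := by
    intro k
    induction k with
    | zero =>
      intro hk
      funext i
      have hi := i.isLt
      simp only [Function.iterate_zero, id]
      by_cases h0 : i.val = 0
      · have htake : (List.ofFn w).take (m - 0 + 1) = List.ofFn w := by
          apply List.take_of_length_le; simp
        rw [if_pos h0, htake, hw]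
        have : i = 0 := Fin.ext h0
        rw [this]
        group
      · rw [if_neg h0, if_neg (by omega)]
        exact congrArg w (Fin.ext (by simp; omega)).symm
    | succ k ih =>
      intro hk
      have hk' : k ≤ m := by omega
      rw [Function.iterate_succ_apply', ih hk']
      funext i
      have hi := i.isLt
      simp only [phi]
      have hQ : ((List.ofFn w).take (m - k + 1)).prod
          = ((List.ofFn w).take (m - (k+1) + 1)).prod * w ⟨m - k, by omega⟩ := by
        have hlen : m - k < (List.ofFn w).length := by simp <;> omega
        have h2 := List.prod_take_succ (List.ofFn w) (m - k) hlen
        have hmk : m - (k+1) + 1 = m - k := by omega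
        rw [hmk, h2, List.getElem_ofFn]
      have hlast :
          (if (Fin.last m).val = 0 then
            (c * (((List.ofFn w).take (m - k + 1)).prod)⁻¹) * w 0 *
              (c * (((List.ofFn w).take (m - k + 1)).prod)⁻¹)⁻¹
          else if (Fin.last m).val ≤ k then c * w ⟨min (m - k + (Fin.last m).val) m, by omega⟩ * c⁻¹
          else w ⟨min ((Fin.last m).val - k) m, by omega⟩)
          = w ⟨m - k, by omega⟩ := by
        simp only [Fin.val_last]
        rw [if_neg (by omega), if_neg (by omega)]
        exact congrArg w (Fin.ext (by simp))
      by_cases h0 : i = 0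
      · rw [if_pos h0, hlast]
        have h0v : i.val = 0 := by rw [h0]; rfl
        rw [if_pos h0v, if_pos (show ((0 : Fin (m+1)) : ℕ) = 0 from rfl), hQ]
        group
      · rw [if_neg h0]
        have h0v : ¬ i.val = 0 := fun h => h0 (Fin.ext h)
        rw [if_neg h0v]
        by_cases h1 : i = 1
        · rw [if_pos h1, hlast]
          have h1v : i.val = 1 := by rw [h1]; exact hone
          rw [if_pos (by omega)]
          have : (⟨m - k, by omega⟩ : Fin (m+1)) = ⟨min (m - (k+1) + i.val) m, by omega⟩ :=
            Fin.ext (by simp; omega)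
          rw [this]
        · rw [if_neg h1]
          have h1v : i.val ≠ 1 := fun h => h1 (Fin.ext (by rw [h, hone]))
          have hsub : (i - 1).val = i.val - 1 := by
            rw [Fin.coe_sub_one, if_neg h0]
          simp only [hsub]; rw [if_neg (by omega)]
          by_cases hik : i.val ≤ k + 1
          · rw [if_pos (by omega), if_pos hik]
            have : (⟨min (m - k + (i.val - 1)) m, by omega⟩ : Fin (m+1))
                = ⟨min (m - (k+1) + i.val) m, by omega⟩ := Fin.ext (by simp; omega)
            rw [this]
          · rw [if_neg (by omega), if_neg hik]
            exact congrArg w (Fin.ext (by simp; omega))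
  rw [key m le_rfl]
  funext i
  have hi := i.isLt
  by_cases h0 : i.val = 0
  · rw [if_pos h0]
    have h1 : (List.ofFn w).take (m - m + 1) = (List.ofFn w).take 1 := by
      congr 1; omega
    have h2 : ((List.ofFn w).take 1).prod = w 0 := by
      have hlen : 0 < (List.ofFn w).length := by simp
      have h3 := List.prod_take_succ (List.ofFn w) 0 hlen
      simpa using h3
    rw [h1, h2]
    have : i = 0 := Fin.ext h0
    rw [this]
    group
  · rw [if_neg h0, if_pos (by omega)]
    have : (⟨min (m - m + i.val) m, by omega⟩ : Fin (m+1)) = i := Fin.ext (by simp; omega)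
    rw [this]
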